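/- Every sequentially compact Hausdorff topological space is doubly countably compact: for every double sequence (x_{m,n})_{m,n∈ℕ} in X there exists a free ultrafilter p on ℕ such that the double p-limit lim_{n→p} lim_{m→p} x_{m,n} exists in X. -/
import Mathlib

/-- An ultrafilter on `ℕ` is free if it contains the cofinite filter. -/
def FreeUltrafilter (p : Ultrafilter ℕ) : Prop := (↑p : Filter ℕ) ≤ Filter.cofinite

open Filter Topology

/-- Diagonal extraction: a common subsequence along which every column converges. -/
lemma diag_subseq {X : Type*} [TopologicalSpace X] [SeqCompactSpace X]
    (x : ℕ → ℕ → X) :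
    ∃ d : ℕ → ℕ, StrictMono d ∧ ∀ n, ∃ a : X,
      Filter.Tendsto (fun k => x (d k) n) Filter.atTop (nhds a) := by
  -- recursively choose refinements
  have step : ∀ (n : ℕ) (f : ℕ → ℕ), StrictMono f →
      ∃ g : ℕ → ℕ, StrictMono g ∧ ∃ a : X,
        Tendsto (fun m => x (f (g m)) n) atTop (nhds a) := by
    intro n f hf
    obtain ⟨a, g, hg, hconv⟩ := SeqCompactSpace.tendsto_subseq (fun m => x (f m) n)
    exact ⟨g, hg, a, hconv⟩
  -- F n : the n-th refined subsequence
  let F : ℕ → {f : ℕ → ℕ // StrictMono f} := fun n =>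
    Nat.rec ⟨id, strictMono_id⟩
      (fun n fn => ⟨fn.1 ∘ Classical.choose (step n fn.1 fn.2),
        fn.2.comp (Classical.choose_spec (step n fn.1 fn.2)).1⟩) n
  have hF : ∀ n, ∃ a : X, Tendsto (fun m => x ((F (n+1)).1 m) n) atTop (nhds a) := by
    intro n
    exact (Classical.choose_spec (step n (F n).1 (F n).2)).2
  have hFsucc : ∀ n, ∃ g : ℕ → ℕ, StrictMono g ∧ (F (n+1)).1 = (F n).1 ∘ g := by
    intro n
    exact ⟨Classical.choose (step n (F n).1 (F n).2),
      (Classical.choose_spec (step n (F n).1 (F n).2)).1, rfl⟩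
  -- composition fact
  have comp : ∀ (n j : ℕ), ∃ h : ℕ → ℕ, StrictMono h ∧ (F (n + j)).1 = (F n).1 ∘ h := by
    intro n j
    induction j with
    | zero => exact ⟨id, strictMono_id, rfl⟩
    | succ j ih =>
      obtain ⟨h, hh, hEq⟩ := ih
      obtain ⟨g, hg, hEq'⟩ := hFsucc (n + j)
      exact ⟨h ∘ g, hh.comp hg, by rw [show n + (j+1) = (n + j) + 1 from rfl, hEq', hEq]; rfl⟩
  -- diagonal
  set d : ℕ → ℕ := fun k => (F (k+1)).1 k with hd
  have hdmono : StrictMono d := by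
    apply strictMono_nat_of_lt_succ
    intro k
    obtain ⟨g, hg, hEq⟩ := hFsucc (k+1)
    have h1 : d (k+1) = (F (k+1)).1 (g (k+1)) := congrFun hEq (k+1)
    rw [h1]
    exact (F (k+1)).2 (lt_of_lt_of_le (Nat.lt_succ_self k) (hg.le_apply))
  refine ⟨d, hdmono, fun n => ?_⟩
  obtain ⟨a, ha⟩ := hF n
  refine ⟨a, ?_⟩
  -- show for every k, d (k + n) is F (n+1) applied to something ≥ k
  have key : ∀ k : ℕ, ∃ j, k ≤ j ∧ d (k + n) = (F (n+1)).1 j := by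
    intro k
    obtain ⟨h, hh, hEq⟩ := comp (n+1) k
    have : k + n + 1 = (n + 1) + k := by omega
    refine ⟨h (k + n), le_trans (Nat.le_add_right k n) hh.le_apply, ?_⟩
    rw [show d (k + n) = (F (k + n + 1)).1 (k + n) from rfl, show k + n + 1 = n + 1 + k by omega]
    exact congrFun hEq (k + n)
  set e : ℕ → ℕ := fun k => Classical.choose (key k) with he
  have he1 : ∀ k, k ≤ e k := fun k => (Classical.choose_spec (key k)).1
  have he2 : ∀ k, d (k + n) = (F (n+1)).1 (e k) := fun k => (Classical.choose_spec (key k)).2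
  have hetop : Tendsto e atTop atTop := tendsto_atTop_mono he1 tendsto_id
  have : Tendsto (fun k => x (d (k + n)) n) atTop (nhds a) := by
    have := ha.comp hetop
    convert this using 1
    funext k
    rw [he2 k]
    rfl
  exact (tendsto_add_atTop_iff_nat n).1 this

/-- Every sequentially compact Hausdorff space is doubly countably compact:
for each double sequence `(x_{m,n})` there is a free ultrafilter `p` on `ℕ`
such that the double `p`-limit `lim_{n→p} lim_{m→p} x_{m,n}` exists: the set
of `n` for which the inner `p`-limit `L n = lim_{m→p} x_{m,n}` exists belongs
to `p`, and `L` has a `p`-limit `e` in `X`. -/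
theorem seqCompact_doubly_countably_compact {X : Type*} [TopologicalSpace X]
    [T2Space X] [SeqCompactSpace X] (x : ℕ → ℕ → X) :
    ∃ p : Ultrafilter ℕ, FreeUltrafilter p ∧
      ∃ (L : ℕ → X) (e : X),
        {n : ℕ | Filter.Tendsto (fun m => x m n) ↑p (nhds (L n))} ∈ p ∧
        Filter.Tendsto L ↑p (nhds e) := by
  obtain ⟨d, hd, hconv⟩ := diag_subseq x
  choose L hL using hconv
  obtain ⟨e, σ, hσ, hLσ⟩ := SeqCompactSpace.tendsto_subseq (fun k => L (d k))
  set τ : ℕ → ℕ := d ∘ σ with hτ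
  have hτmono : StrictMono τ := hd.comp hσ
  have hmap : Filter.map τ Filter.atTop ≤ Filter.atTop := hτmono.tendsto_atTop
  have : (Filter.map τ Filter.atTop).NeBot := Filter.map_neBot
  refine ⟨Ultrafilter.of (Filter.map τ Filter.atTop), ?_, L, e, ?_, ?_⟩
  · exact le_trans (Ultrafilter.of_le _) (by rw [Nat.cofinite_eq_atTop]; exact hmap)
  · have : ∀ n, Filter.Tendsto (fun m => x m n) ↑(Ultrafilter.of (Filter.map τ Filter.atTop))
        (nhds (L n)) := by
      intro n
      refine Filter.Tendsto.mono_left ?_ (Ultrafilter.of_le _)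
      rw [Filter.tendsto_map'_iff]
      exact (hL n).comp hσ.tendsto_atTop
    have : {n : ℕ | Filter.Tendsto (fun m => x m n)
        ↑(Ultrafilter.of (Filter.map τ Filter.atTop)) (nhds (L n))} = Set.univ :=
      Set.eq_univ_of_forall this
    rw [this]
    exact Filter.univ_mem
  · refine Filter.Tendsto.mono_left ?_ (Ultrafilter.of_le _)
    rw [Filter.tendsto_map'_iff]
    exact hLσ
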